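/- For every integer E with E ≡ 2 (mod 4) and E ≥ 6, the truncated Catalan product √2_E = (2²/(1·3))·(6²/(5·7))···((E-4)²/((E-5)(E-3)))·(E/(E-1)) satisfies √2 < √2_E. -/

import Mathlib

open Filter Real Finset Topology

/-- The truncated Catalan product
`√2_E = (2²/(1·3))·(6²/(5·7))···((E-4)²/((E-5)(E-3)))·(E/(E-1))` for `E ≡ 2 (mod 4)`. -/
noncomputable def catalanTrunc (E : ℕ) : ℝ :=
  (∏ k ∈ Finset.range ((E - 2) / 4),
    (4 * (k : ℝ) + 2) ^ 2 / ((4 * k + 1) * (4 * k + 3))) * ((E : ℝ) / (E - 1))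

noncomputable def catP (j : ℕ) : ℝ :=
  ∏ k ∈ Finset.range j, (4 * (k : ℝ) + 2) ^ 2 / ((4 * k + 1) * (4 * k + 3))

noncomputable def catF (j : ℕ) : ℝ := catP j * ((4 * (j : ℝ) + 2) / (4 * j + 1))

noncomputable def catD (j : ℕ) : ℝ :=
  ∏ k ∈ Finset.range j, ((1 : ℝ) - (1/4 : ℝ) ^ 2 / ((k : ℝ) + 1) ^ 2)

noncomputable def catW (n : ℕ) : ℝ :=
  ∏ i ∈ Finset.range n, ((2 : ℝ) * i + 2) / (2 * i + 1) * ((2 * i + 2) / (2 * i + 3))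

lemma catP_pos (j : ℕ) : 0 < catP j := by
  apply Finset.prod_pos; intro k _; positivity

lemma catP_eq (j : ℕ) : catP j = catW (2 * j) * catD j := by
  induction j with
  | zero => simp [catP, catW, catD]
  | succ j ih =>
    have h2 : 2 * (j + 1) = (2 * j) + 1 + 1 := by ring
    have hD : catD (j + 1) = catD j * ((1:ℝ) - (1/4:ℝ) ^ 2 / ((j:ℝ) + 1) ^ 2) :=
      Finset.prod_range_succ _ j
    have hW1 : catW (2 * (j + 1)) = catW (2 * j + 1) *
        ((2:ℝ) * (2 * j + 1 : ℕ) + 2) / (2 * (2 * j + 1 : ℕ) + 1) *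
        ((2 * (2 * j + 1 : ℕ) + 2) / (2 * (2 * j + 1 : ℕ) + 3)) := by
      rw [h2, catW, Finset.prod_range_succ, ← catW]; ring
    have hW0 : catW (2 * j + 1) = catW (2 * j) *
        (((2:ℝ) * (2 * j : ℕ) + 2) / (2 * (2 * j : ℕ) + 1) *
        ((2 * (2 * j : ℕ) + 2) / (2 * (2 * j : ℕ) + 3))) :=
      Finset.prod_range_succ _ (2 * j)
    rw [catP, Finset.prod_range_succ, ← catP, ih, hD, hW1, hW0]
    have hx : (0:ℝ) ≤ (j : ℝ) := Nat.cast_nonneg j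
    push_cast
    have h1 : (4 * (j:ℝ) + 1) ≠ 0 := by positivity
    have h3 : (4 * (j:ℝ) + 3) ≠ 0 := by positivity
    have h4 : (4 * (j:ℝ) + 4) ≠ 0 := by positivity
    have h5 : (4 * (j:ℝ) + 5) ≠ 0 := by positivity
    have hj1 : ((j:ℝ) + 1) ≠ 0 := by positivity
    field_simp
    ring

lemma catD_tendsto : Tendsto catD atTop (𝓝 (Real.sqrt 2 / 2 * (4 / π))) := by
  have h := Real.tendsto_euler_sin_prod (1/4)
  have hs : Real.sin (π * (1/4)) = Real.sqrt 2 / 2 := by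
    rw [mul_one_div, Real.sin_pi_div_four]
  rw [hs] at h
  have h2 := h.mul_const (4 / π)
  have hpi : (π : ℝ) ≠ 0 := Real.pi_ne_zero
  convert h2 using 2 with n
  rw [catD]
  field_simp

lemma catP_tendsto : Tendsto catP atTop (𝓝 (Real.sqrt 2)) := by
  have hmul : Tendsto (fun j : ℕ => 2 * j) atTop atTop :=
    tendsto_atTop_atTop.mpr fun b => ⟨b, fun a ha => by omega⟩
  have hW : Tendsto (fun j => catW (2 * j)) atTop (𝓝 (π / 2)) :=
    Real.tendsto_prod_pi_div_two.comp hmul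
  have h := hW.mul catD_tendsto
  have hpi : (π : ℝ) ≠ 0 := Real.pi_ne_zero
  have : π / 2 * (Real.sqrt 2 / 2 * (4 / π)) = Real.sqrt 2 := by field_simp; ring
  rw [this] at h
  exact h.congr fun j => (catP_eq j).symm

lemma catF_tendsto : Tendsto catF atTop (𝓝 (Real.sqrt 2)) := by
  have h1 : Tendsto (fun j : ℕ => (4 * (j : ℝ) + 1)) atTop atTop := by
    apply tendsto_atTop_add_const_right
    exact tendsto_natCast_atTop_atTop.const_mul_atTop (by norm_num)
  have h2 : Tendsto (fun j : ℕ => (4 * (j : ℝ) + 2) / (4 * j + 1)) atTop (𝓝 1) := by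
    have h0 : Tendsto (fun j : ℕ => 1 + (4 * (j : ℝ) + 1)⁻¹) atTop (𝓝 (1 + 0)) :=
      tendsto_const_nhds.add h1.inv_tendsto_atTop
    rw [add_zero] at h0
    refine h0.congr fun j => ?_
    have : (4 * (j:ℝ) + 1) ≠ 0 := by positivity
    field_simp
    ring
  have := catP_tendsto.mul h2
  rw [mul_one] at this
  exact this

lemma catF_succ_lt (j : ℕ) : catF (j + 1) < catF j := by
  have hP := catP_pos j
  have hx : (0:ℝ) ≤ (j : ℝ) := Nat.cast_nonneg j
  rw [catF, catF, catP, Finset.prod_range_succ, ← catP]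
  push_cast
  rw [mul_assoc]
  refine mul_lt_mul_of_pos_left ?_ hP
  rw [div_mul_div_comm, div_lt_div_iff₀ (by positivity) (by positivity)]
  nlinarith [sq_nonneg ((j:ℝ))]

lemma sqrt_two_lt_catF (j : ℕ) : Real.sqrt 2 < catF j := by
  have hanti : Antitone catF :=
    antitone_nat_of_succ_le fun n => (catF_succ_lt n).le
  have hle : Real.sqrt 2 ≤ catF (j + 1) := by
    refine le_of_tendsto catF_tendsto ?_
    filter_upwards [eventually_ge_atTop (j + 1)] with n hn
    exact hanti hn
  exact lt_of_le_of_lt hle (catF_succ_lt j)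

theorem catalan_trunc_gt_sqrt_two (E : ℕ) (hE : E % 4 = 2) (hE6 : 6 ≤ E) :
    Real.sqrt 2 < catalanTrunc E := by
  obtain ⟨j, rfl⟩ : ∃ j, E = 4 * j + 2 := ⟨(E - 2) / 4, by omega⟩
  have hidx : (4 * j + 2 - 2) / 4 = j := by omega
  have heq : catalanTrunc (4 * j + 2) = catF j := by
    rw [catalanTrunc, hidx, catF, catP]
    congr 1
    push_cast
    ring_nf
  rw [heq]
  exact sqrt_two_lt_catF j
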